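/- Assume ω > 0, ε ≥ 0, β < 0 and α(ω+ε) < ωε, and set x^e = √((α − ωε/(ω+ε))/β), y^e = (ε/(ω+ε))·x^e. Then the Hessian matrix of the potential V at the points ±(x^e, y^e) has strictly negative determinant, i.e. one positive and one negative eigenvalue; in particular ±(x^e, y^e) are two index-1 saddle points of V. -/
import Mathlib


open Polynomial

/-- Hessian matrix of the potential
`V(x,y) = −(α/2)x² + (β/4)x⁴ + (ω/2)y² + (ε/2)(x−y)²`
at a point with first coordinate `x`. -/
noncomputable def HessV (α β ω ε x : ℝ) : Matrix (Fin 2) (Fin 2) ℝ :=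
  !![-α + 3 * β * x ^ 2 + ε, -ε; -ε, ω + ε]

lemma saddle_charpoly (p q r u : ℝ) (hd : p * u - q * r < 0) :
    ∃ a b : ℝ, 0 < a ∧ b < 0 ∧
      (!![p, q; r, u] : Matrix (Fin 2) (Fin 2) ℝ).charpoly = (X - C a) * (X - C b) := by
  set t := p + u with ht
  set d := p * u - q * r with hdd
  have hdisc : 0 < t ^ 2 - 4 * d := by nlinarith [sq_nonneg t]
  set s := Real.sqrt (t ^ 2 - 4 * d) with hs
  have hs2 : s ^ 2 = t ^ 2 - 4 * d := Real.sq_sqrt hdisc.le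
  have hsnn : 0 ≤ s := Real.sqrt_nonneg _
  have hst : |t| < s := by
    have h1 : t ^ 2 < s ^ 2 := by nlinarith
    nlinarith [abs_nonneg t, sq_abs t]
  obtain ⟨hl, hr⟩ := abs_lt.mp hst
  refine ⟨(t + s) / 2, (t - s) / 2, by linarith, by linarith, ?_⟩
  have hab : (t + s) / 2 + (t - s) / 2 = t := by ring
  have hmul : (t + s) / 2 * ((t - s) / 2) = d := by linear_combination (-(1:ℝ)/4) * hs2
  have key : (!![p, q; r, u] : Matrix (Fin 2) (Fin 2) ℝ).charpoly
      = X ^ 2 - C t * X + C d := by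
    rw [Matrix.charpoly, Matrix.det_fin_two]
    simp [Matrix.charmatrix_apply_eq, Matrix.charmatrix_apply_ne, ht, hdd]
    ring
  rw [key, ← hab, ← hmul, C_add, C_mul]
  ring

theorem nontrivial_equilibria_index_one_saddles (α β ω ε : ℝ)
    (hω : 0 < ω) (hε : 0 ≤ ε) (hβ : β < 0)
    (h : α * (ω + ε) < ω * ε)
    (xe ye : ℝ)
    (hxe : xe = Real.sqrt ((α - ω * ε / (ω + ε)) / β))
    (hye : ye = ε / (ω + ε) * xe) :
    (HessV α β ω ε xe).det < 0 ∧
    (HessV α β ω ε (-xe)).det < 0 ∧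
    (∃ a b : ℝ, 0 < a ∧ b < 0 ∧
      (HessV α β ω ε xe).charpoly = (X - C a) * (X - C b)) ∧
    (∃ a b : ℝ, 0 < a ∧ b < 0 ∧
      (HessV α β ω ε (-xe)).charpoly = (X - C a) * (X - C b)) := by
  have hωε : 0 < ω + ε := by linarith
  have hnum : α - ω * ε / (ω + ε) < 0 := by
    have : α < ω * ε / (ω + ε) := (lt_div_iff₀ hωε).mpr h
    linarith
  have harg : 0 ≤ (α - ω * ε / (ω + ε)) / β := le_of_lt (div_pos_of_neg_of_neg hnum hβ)
  have hx2 : xe ^ 2 = (α - ω * ε / (ω + ε)) / β := by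
    rw [hxe]; exact Real.sq_sqrt harg
  have hbx : β * xe ^ 2 = α - ω * ε / (ω + ε) := by
    rw [hx2, mul_comm, div_mul_cancel₀ _ hβ.ne]
  have hdiv : ω * ε / (ω + ε) * (ω + ε) = ω * ε := div_mul_cancel₀ _ (ne_of_gt hωε)
  have hdet : (HessV α β ω ε xe).det < 0 := by
    rw [HessV, Matrix.det_fin_two_of]
    nlinarith [hbx, hdiv, h]
  have hdet' : (HessV α β ω ε (-xe)).det < 0 := by
    rw [HessV, Matrix.det_fin_two_of]
    nlinarith [hbx, hdiv, h]
  refine ⟨hdet, hdet', ?_, ?_⟩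
  · rw [HessV] at hdet ⊢
    rw [Matrix.det_fin_two_of] at hdet
    exact saddle_charpoly _ _ _ _ hdet
  · rw [HessV] at hdet' ⊢
    rw [Matrix.det_fin_two_of] at hdet'
    exact saddle_charpoly _ _ _ _ hdet'
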